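/- arXiv:1507.08309 — 2 statements merged into one kernel-verified Lean document; each statement's English description precedes it below -/
import Mathlib

section
/- Let σ > 0, let q ∈ ℝ^m be a query, and define f(D) ∈ ℝ^c by f(D)_j = GK_j(D, q) for each class j ∈ Fin c. Then for every labeled dataset D and every labeled point (d_A, j₀), the L1 distance satisfies ‖f(D ∪ {(d_A, j₀)}) − f(D)‖₁ = K_σ(‖d_A − q‖) ≤ 1/(σ√(2π)), and equality with 1/(σ√(2π)) holds when d_A = q. Hence the sensitivity of f over datasets differing by one inserted element is exactly 1/(σ√(2π)). -/
open Real

/-- The Gaussian kernel with parameter `σ`. -/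
noncomputable def gaussK (σ : ℝ) (t : ℝ) : ℝ :=
  (1 / (σ * Real.sqrt (2 * Real.pi))) * Real.exp (-(t ^ 2) / (2 * σ ^ 2))

/-- The class score `GK_j(D, q)`. -/
noncomputable def GK {m c : ℕ} (σ : ℝ) (q : EuclideanSpace ℝ (Fin m)) (j : Fin c)
    (D : Multiset (EuclideanSpace ℝ (Fin m) × Fin c)) : ℝ :=
  (D.map (fun p => if p.2 = j then gaussK σ ‖p.1 - q‖ else 0)).sum

lemma gaussK_nonneg (σ t : ℝ) (hσ : 0 < σ) : 0 ≤ gaussK σ t := by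
  unfold gaussK
  positivity

theorem stmt_4 {m c : ℕ} (σ : ℝ) (hσ : 0 < σ)
    (q : EuclideanSpace ℝ (Fin m))
    (D : Multiset (EuclideanSpace ℝ (Fin m) × Fin c))
    (dA : EuclideanSpace ℝ (Fin m)) (j₀ : Fin c) :
    (∑ j : Fin c, |GK σ q j ((dA, j₀) ::ₘ D) - GK σ q j D|)
        = gaussK σ ‖dA - q‖ ∧
      gaussK σ ‖dA - q‖ ≤ 1 / (σ * Real.sqrt (2 * Real.pi)) ∧
      (dA = q → gaussK σ ‖dA - q‖ = 1 / (σ * Real.sqrt (2 * Real.pi))) := by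
  have hdiff : ∀ j : Fin c, GK σ q j ((dA, j₀) ::ₘ D) - GK σ q j D
      = if j₀ = j then gaussK σ ‖dA - q‖ else 0 := by
    intro j
    simp [GK, Multiset.map_cons, Multiset.sum_cons]
  refine ⟨?_, ?_, ?_⟩
  · calc (∑ j : Fin c, |GK σ q j ((dA, j₀) ::ₘ D) - GK σ q j D|)
        = ∑ j : Fin c, if j₀ = j then |gaussK σ ‖dA - q‖| else 0 := by
          refine Finset.sum_congr rfl fun j _ => ?_
          rw [hdiff j]; split_ifs <;> simp
      _ = |gaussK σ ‖dA - q‖| := by simp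
      _ = gaussK σ ‖dA - q‖ := abs_of_nonneg (gaussK_nonneg σ _ hσ)
  · unfold gaussK
    have h1 : Real.exp (-(‖dA - q‖ ^ 2) / (2 * σ ^ 2)) ≤ 1 := by
      rw [Real.exp_le_one_iff]
      apply div_nonpos_of_nonpos_of_nonneg
      · simp [sq_nonneg]
      · positivity
    have h2 : 0 ≤ 1 / (σ * Real.sqrt (2 * Real.pi)) := by positivity
    nlinarith [Real.exp_pos (-(‖dA - q‖ ^ 2) / (2 * σ ^ 2))]
  · intro h
    subst h
    simp [gaussK]
end

section
/- Let σ > 0, let D be a labeled dataset of points in ℝ^m, let q ∈ ℝ^m be a query, let B ∈ Fin c be a class, and let y ∈ ℝ^m be any point whatsoever. Then there exists n ∈ ℕ such that after adding n copies of the labeled point (y, B) to D, the class-B score strictly exceeds every other class score: GK_B(D ∪ n·{(y, B)}, q) > GK_j(D ∪ n·{(y, B)}, q) for every class j ≠ B. That is, under Gaussian kernel density classification, adding sufficiently many points of class B changes the classification of q to B no matter how far away the added points are. -/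
open Real

lemma gaussK_pos (σ : ℝ) (hσ : 0 < σ) (t : ℝ) : 0 < gaussK σ t := by
  unfold gaussK
  have h2 : 0 < Real.sqrt (2 * Real.pi) := Real.sqrt_pos.2 (by positivity)
  positivity

lemma GK_add {m c : ℕ} (σ : ℝ) (q : EuclideanSpace ℝ (Fin m)) (j : Fin c)
    (D E : Multiset (EuclideanSpace ℝ (Fin m) × Fin c)) :
    GK σ q j (D + E) = GK σ q j D + GK σ q j E := by
  simp [GK]

lemma GK_replicate {m c : ℕ} (σ : ℝ) (q : EuclideanSpace ℝ (Fin m)) (j : Fin c)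
    (n : ℕ) (p : EuclideanSpace ℝ (Fin m) × Fin c) :
    GK σ q j (Multiset.replicate n p)
      = n * (if p.2 = j then gaussK σ ‖p.1 - q‖ else 0) := by
  simp [GK, Multiset.map_replicate, Multiset.sum_replicate, nsmul_eq_mul]

theorem stmt_15 {m c : ℕ} (σ : ℝ) (hσ : 0 < σ)
    (D : Multiset (EuclideanSpace ℝ (Fin m) × Fin c))
    (q : EuclideanSpace ℝ (Fin m)) (B : Fin c) (y : EuclideanSpace ℝ (Fin m)) :
    ∃ n : ℕ, ∀ j : Fin c, j ≠ B →
      GK σ q j (D + Multiset.replicate n (y, B))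
        < GK σ q B (D + Multiset.replicate n (y, B)) := by
  have hc : Nonempty (Fin c) := ⟨B⟩
  set g := gaussK σ ‖y - q‖ with hg
  have hgpos : 0 < g := gaussK_pos σ hσ _
  set M : ℝ := Finset.univ.sup' (Finset.univ_nonempty) (fun j : Fin c => GK σ q j D) with hM
  obtain ⟨n, hn⟩ := exists_nat_gt ((M - GK σ q B D) / g)
  refine ⟨n, fun j hj => ?_⟩
  rw [GK_add, GK_add, GK_replicate, GK_replicate]
  simp only [eq_self_iff_true, if_true, if_neg hj.symm, mul_zero, add_zero]
  have h1 : GK σ q j D ≤ M := by rw [hM]; exact Finset.le_sup' (fun j : Fin c => GK σ q j D) (Finset.mem_univ j)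
  have h2 : M - GK σ q B D < n * g := by
    rwa [div_lt_iff₀ hgpos] at hn
  linarith
end
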